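/- Let n ≥ 2 be an integer and 0 < r < π. Let λ ∈ ℝ and let φ : [0,r] → ℝ be C² with φ(t) > 0 for t ∈ [0,r), φ(r) = 0, φ'(0) = 0, and φ''(t) + (n−1)·(cos t / sin t)·φ'(t) + λφ(t) = 0 on (0,r). Then λ ≥ 1 / ( ∫₀ʳ (1/sin^{n−1}(σ)) · (∫₀^σ sin^{n−1}(s) ds) dσ ). -/

import Mathlib

open Set intervalIntegral Real

/-- Betz–Camera–Gzyl lower bound for the first Dirichlet eigenvalue of a spherical cap
of radius `r < π` in the unit `n`-sphere:
`λ ≥ 1 / ∫₀ʳ sin(σ)^{-(n-1)} ∫₀^σ sin(s)^{n-1} ds dσ`. -/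
theorem stmt9 (n : ℕ) (hn : 2 ≤ n) (r : ℝ) (hr : 0 < r) (hrπ : r < Real.pi)
    (lam : ℝ) (φ : ℝ → ℝ) (hφ : ContDiffOn ℝ 2 φ (Set.Icc 0 r))
    (hφpos : ∀ t ∈ Set.Ico (0:ℝ) r, 0 < φ t) (hφr : φ r = 0)
    (hφ'0 : derivWithin φ (Set.Icc 0 r) 0 = 0)
    (hφode : ∀ t ∈ Set.Ioo (0:ℝ) r,
      deriv (deriv φ) t
        + ((n : ℝ) - 1) * (Real.cos t / Real.sin t) * deriv φ t + lam * φ t = 0) :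
    lam ≥ 1 / (∫ σ in (0:ℝ)..r,
      (1 / Real.sin σ ^ (n - 1)) * ∫ s in (0:ℝ)..σ, Real.sin s ^ (n - 1)) := by
  have hrle : (0:ℝ) ≤ r := hr.le
  set ψ : ℝ → ℝ := derivWithin φ (Set.Icc 0 r) with hψdef
  have hφcont : ContinuousOn φ (Set.Icc 0 r) := hφ.continuousOn
  have hψcont : ContinuousOn ψ (Set.Icc 0 r) :=
    hφ.continuousOn_derivWithin (uniqueDiffOn_Icc hr) (by norm_num)
  -- ψ agrees with deriv φ on the interior
  have hψeq : ∀ t ∈ Set.Ioo (0:ℝ) r, ψ t = deriv φ t := by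
    intro t ht
    exact derivWithin_of_mem_nhds (Icc_mem_nhds ht.1 ht.2)
  -- sin positive on (0, r)
  have hsinpos : ∀ t ∈ Set.Ioo (0:ℝ) r, 0 < Real.sin t := by
    intro t ht
    exact Real.sin_pos_of_pos_of_lt_pi ht.1 (ht.2.trans hrπ)
  have hφdiff : ∀ t ∈ Set.Ioo (0:ℝ) r, HasDerivAt φ (deriv φ t) t := by
    intro t ht
    have := (hφ.contDiffAt (Icc_mem_nhds ht.1 ht.2)).differentiableAt (by norm_num)
    exact this.hasDerivAt
  have hderiv2 : ∀ t ∈ Set.Ioo (0:ℝ) r, HasDerivAt (deriv φ) (deriv (deriv φ) t) t := by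
    intro t ht
    have h1 : ContDiffOn ℝ 1 (deriv φ) (Set.Ioo 0 r) :=
      (hφ.mono Set.Ioo_subset_Icc_self).deriv_of_isOpen isOpen_Ioo (by norm_num)
    have := (h1.contDiffAt (isOpen_Ioo.mem_nhds ht)).differentiableAt (by norm_num)
    exact this.hasDerivAt
  -- the key function F = sin^{n-1} · ψ and its FTC identity
  set F : ℝ → ℝ := fun t => Real.sin t ^ (n - 1) * ψ t with hFdef
  have hFcont : ContinuousOn F (Set.Icc 0 r) :=
    (Real.continuous_sin.pow _).continuousOn.mul hψcont
  have hF0 : F 0 = 0 := by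
    simp [hFdef, Real.sin_zero, zero_pow (by omega : n - 1 ≠ 0)]
  -- derivative of F on the interior
  have hFderiv : ∀ t ∈ Set.Ioo (0:ℝ) r,
      HasDerivAt F (-(lam * (Real.sin t ^ (n - 1) * φ t))) t := by
    intro t ht
    have hsin : Real.sin t ≠ 0 := (hsinpos t ht).ne'
    have hs1 : HasDerivAt (fun t => Real.sin t ^ (n - 1))
        ((n - 1 : ℕ) * Real.sin t ^ (n - 1 - 1) * Real.cos t) t :=
      (Real.hasDerivAt_sin t).pow _
    have hprod := hs1.mul (hderiv2 t ht)
    have heqF : F =ᶠ[nhds t] fun u => Real.sin u ^ (n - 1) * deriv φ u := by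
      filter_upwards [isOpen_Ioo.mem_nhds ht] with u hu
      simp [hFdef, hψeq u hu]
    have hF' : HasDerivAt F
        (((n - 1 : ℕ) * Real.sin t ^ (n - 1 - 1) * Real.cos t) * deriv φ t
          + Real.sin t ^ (n - 1) * deriv (deriv φ) t) t := by
      exact HasDerivAt.congr_of_eventuallyEq hprod heqF
    have hode := hφode t ht
    have hcast : ((n : ℝ) - 1) = ((n - 1 : ℕ) : ℝ) := by
      have : (1:ℕ) ≤ n := by omega
      push_cast [Nat.cast_sub this]
      ring
    have hpow : Real.sin t ^ (n - 1) = Real.sin t ^ (n - 1 - 1) * Real.sin t := by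
      rw [← pow_succ]
      congr 1
      omega
    have : ((n - 1 : ℕ) * Real.sin t ^ (n - 1 - 1) * Real.cos t) * deriv φ t
          + Real.sin t ^ (n - 1) * deriv (deriv φ) t
        = -(lam * (Real.sin t ^ (n - 1) * φ t)) := by
      have hdd : deriv (deriv φ) t
          = -(((n : ℝ) - 1) * (Real.cos t / Real.sin t) * deriv φ t + lam * φ t) := by
        linarith [hode]
      rw [hdd, hpow, ← hcast]
      field_simp
      ring
    rwa [this] at hF'
  -- FTC for F on [0, σ]: sin σ^{n-1} ψ σ = -lam ∫₀^σ sin^{n-1} φ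
  have hFid : ∀ σ ∈ Set.Ioc (0:ℝ) r,
      F σ = -(lam * ∫ s in (0:ℝ)..σ, Real.sin s ^ (n - 1) * φ s) := by
    intro σ hσ
    have hsub : Set.Icc (0:ℝ) σ ⊆ Set.Icc 0 r := Set.Icc_subset_Icc le_rfl hσ.2
    have hint : IntervalIntegrable (fun s => -(lam * (Real.sin s ^ (n - 1) * φ s)))
        MeasureTheory.volume 0 σ := by
      apply ContinuousOn.intervalIntegrable
      rw [Set.uIcc_of_le hσ.1.le]
      exact (((Real.continuous_sin.pow _).continuousOn.mul
        (hφcont.mono hsub)).const_smul lam).neg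
    have := intervalIntegral.integral_eq_sub_of_hasDeriv_right_of_le hσ.1.le
      (hFcont.mono hsub)
      (fun x hx => ((hFderiv x ⟨hx.1, lt_of_lt_of_le hx.2 hσ.2⟩).hasDerivWithinAt))
      hint
    rw [hF0, sub_zero] at this
    rw [← this, intervalIntegral.integral_neg, ← intervalIntegral.integral_const_mul]
  -- notation for the inner integrals
  set J : ℝ → ℝ := fun σ => ∫ s in (0:ℝ)..σ, Real.sin s ^ (n - 1) * φ s with hJdef
  set K : ℝ → ℝ := fun σ => ∫ s in (0:ℝ)..σ, Real.sin s ^ (n - 1) with hKdef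
  have hsinnonneg : ∀ s ∈ Set.Icc (0:ℝ) r, 0 ≤ Real.sin s := by
    intro s hs
    exact Real.sin_nonneg_of_nonneg_of_le_pi hs.1 (hs.2.trans hrπ.le)
  have hφ0pos : 0 < φ 0 := hφpos 0 ⟨le_rfl, hr⟩
  -- J is positive on (0, r]
  have hJpos : ∀ σ ∈ Set.Ioc (0:ℝ) r, 0 < J σ := by
    intro σ hσ
    apply intervalIntegral.intervalIntegral_pos_of_pos_on
    · apply ContinuousOn.intervalIntegrable
      rw [Set.uIcc_of_le hσ.1.le]
      exact (Real.continuous_sin.pow _).continuousOn.mul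
        (hφcont.mono (Set.Icc_subset_Icc le_rfl hσ.2))
    · intro x hx
      have hx1 : 0 < Real.sin x :=
        Real.sin_pos_of_pos_of_lt_pi hx.1 ((hx.2.trans_le hσ.2).trans hrπ)
      have hx2 : 0 < φ x := hφpos x ⟨hx.1.le, hx.2.trans_le hσ.2⟩
      positivity
    · exact hσ.1
  -- ψ on the interior
  have hψid : ∀ σ ∈ Set.Ioo (0:ℝ) r, ψ σ = -(lam * J σ) / Real.sin σ ^ (n - 1) := by
    intro σ hσ
    have hs : (0:ℝ) < Real.sin σ ^ (n - 1) := pow_pos (hsinpos σ hσ) _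
    have := hFid σ ⟨hσ.1, hσ.2.le⟩
    simp only [hFdef] at this
    field_simp
    linarith [this]
  -- FTC for φ
  have hFTCφ : ∀ u ∈ Set.Icc (0:ℝ) r, φ u - φ 0 = ∫ x in (0:ℝ)..u, ψ x := by
    intro u hu
    have hsub : Set.Icc (0:ℝ) u ⊆ Set.Icc 0 r := Set.Icc_subset_Icc le_rfl hu.2
    have := intervalIntegral.integral_eq_sub_of_hasDeriv_right_of_le (f' := ψ) hu.1
      (hφcont.mono hsub)
      (fun x hx => by
        have hx' : x ∈ Set.Ioo (0:ℝ) r := ⟨hx.1, lt_of_lt_of_le hx.2 hu.2⟩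
        have h2 := (hφdiff x hx').hasDerivWithinAt (s := Set.Ioi x)
        rwa [hψeq x hx'])
      (by
        apply ContinuousOn.intervalIntegrable
        rw [Set.uIcc_of_le hu.1]
        exact hψcont.mono hsub)
    linarith [this]
  -- a.e. membership helper
  have haemem : ∀ u : ℝ, ∀ᵐ x ∂MeasureTheory.volume, x ∉ ({0, u} : Set ℝ) := by
    intro u
    apply MeasureTheory.measure_eq_zero_iff_ae_notMem.mp
    exact Set.Countable.measure_zero ((Set.countable_singleton u).insert 0) _
  -- lam > 0
  have hlampos : 0 < lam := by
    by_contra hlam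
    push_neg at hlam
    have h1 : 0 ≤ ∫ x in (0:ℝ)..r, ψ x := by
      apply intervalIntegral.integral_nonneg_of_ae_restrict hrle
      rw [Filter.EventuallyLE, MeasureTheory.ae_restrict_iff' measurableSet_Icc]
      filter_upwards [haemem r] with x hx hx2
      simp only [Set.mem_insert_iff, Set.mem_singleton_iff, not_or] at hx
      have hx3 : x ∈ Set.Ioo (0:ℝ) r :=
        ⟨hx2.1.lt_of_ne (Ne.symm hx.1), hx2.2.lt_of_ne hx.2⟩
      rw [hψid x hx3]
      have hs : (0:ℝ) < Real.sin x ^ (n - 1) := pow_pos (hsinpos x hx3) _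
      have hJ : 0 < J x := hJpos x ⟨hx3.1, hx3.2.le⟩
      have : 0 ≤ -(lam * J x) := by nlinarith
      positivity
    have := hFTCφ r ⟨hrle, le_rfl⟩
    rw [hφr] at this
    linarith
  -- φ ≤ φ 0 on [0, r]
  have hφle : ∀ u ∈ Set.Icc (0:ℝ) r, φ u ≤ φ 0 := by
    intro u hu
    have h1 : (∫ x in (0:ℝ)..u, ψ x) ≤ 0 := by
      rw [← neg_nonneg, ← intervalIntegral.integral_neg]
      apply intervalIntegral.integral_nonneg_of_ae_restrict hu.1
      rw [Filter.EventuallyLE, MeasureTheory.ae_restrict_iff' measurableSet_Icc]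
      filter_upwards [haemem u] with x hx hx2
      simp only [Set.mem_insert_iff, Set.mem_singleton_iff, not_or] at hx
      have hx3 : x ∈ Set.Ioo (0:ℝ) r :=
        ⟨hx2.1.lt_of_ne (Ne.symm hx.1), lt_of_lt_of_le (hx2.2.lt_of_ne hx.2) hu.2⟩
      rw [hψid x hx3]
      have hs : (0:ℝ) < Real.sin x ^ (n - 1) := pow_pos (hsinpos x hx3) _
      have hJ : 0 < J x := hJpos x ⟨hx3.1, hx3.2.le⟩
      have : 0 ≤ lam * J x := by positivity
      rw [neg_div, neg_neg]
      positivity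
    have := hFTCφ u hu
    linarith
  -- the comparison function H
  set H : ℝ → ℝ := fun σ =>
    (1 / Real.sin σ ^ (n - 1)) * ∫ s in (0:ℝ)..σ, Real.sin s ^ (n - 1) with hHdef
  have hHK : ∀ σ, H σ = (1 / Real.sin σ ^ (n - 1)) * K σ := fun σ => rfl
  -- K is positive on (0, r]
  have hKpos : ∀ σ ∈ Set.Ioc (0:ℝ) r, 0 < K σ := by
    intro σ hσ
    apply intervalIntegral.intervalIntegral_pos_of_pos_on
    · exact (Real.continuous_sin.pow _).intervalIntegrable 0 σ
    · intro x hx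
      exact pow_pos (Real.sin_pos_of_pos_of_lt_pi hx.1 ((hx.2.trans_le hσ.2).trans hrπ)) _
    · exact hσ.1
  have hKnonneg : ∀ σ ∈ Set.Ioc (0:ℝ) r, 0 ≤ K σ := fun σ hσ => (hKpos σ hσ).le
  -- positivity of H on (0, r]
  have hHpos : ∀ σ ∈ Set.Ioc (0:ℝ) r, 0 < H σ := by
    intro σ hσ
    rw [hHK]
    have h1 : (0:ℝ) < Real.sin σ ^ (n - 1) :=
      pow_pos (Real.sin_pos_of_pos_of_lt_pi hσ.1 (hσ.2.trans_lt hrπ)) _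
    have h2 := hKpos σ hσ
    positivity
  -- sin r is positive
  have hsinr : 0 < Real.sin r := Real.sin_pos_of_pos_of_lt_pi hr hrπ
  -- uniform bound for H on (0, r]
  set C : ℝ := Real.pi * (1 + (Real.sin r ^ (n - 1))⁻¹) with hCdef
  have hHbound : ∀ σ ∈ Set.Ioc (0:ℝ) r, H σ ≤ C := by
    intro σ hσ
    have hσπ : σ < Real.pi := hσ.2.trans_lt hrπ
    have hsinσ : 0 < Real.sin σ := Real.sin_pos_of_pos_of_lt_pi hσ.1 hσπ
    have hsinσp : 0 < Real.sin σ ^ (n - 1) := pow_pos hsinσ _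
    have hinvr : (0:ℝ) ≤ (Real.sin r ^ (n - 1))⁻¹ := by positivity
    rcases le_or_gt σ (Real.pi / 2) with hcase | hcase
    · -- σ ≤ π/2 : sin is monotone on [0, σ]
      have hKle : K σ ≤ σ * Real.sin σ ^ (n - 1) := by
        have := intervalIntegral.integral_mono_on (μ := MeasureTheory.volume)
          (f := fun s => Real.sin s ^ (n - 1))
          (g := fun _ => Real.sin σ ^ (n - 1)) hσ.1.le
          ((Real.continuous_sin.pow _).intervalIntegrable 0 σ)
          (continuous_const.intervalIntegrable 0 σ)
          (fun x hx => by
            have hx0 : 0 ≤ Real.sin x := Real.sin_nonneg_of_nonneg_of_le_pi hx.1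
              ((hx.2.trans hcase).trans (by linarith [Real.pi_pos]))
            refine pow_le_pow_left₀ hx0 ?_ _
            exact Real.sin_le_sin_of_le_of_le_pi_div_two
              (by linarith [Real.pi_pos, hx.1]) hcase hx.2)
        rw [intervalIntegral.integral_const, smul_eq_mul, sub_zero] at this
        exact this
      have h1 : H σ ≤ σ := by
        rw [hHK, div_mul_eq_mul_div, one_mul, div_le_iff₀ hsinσp]
        exact hKle
      have hCge : Real.pi ≤ C := by
        rw [hCdef, mul_one_add]
        have := mul_nonneg Real.pi_pos.le hinvr
        linarith
      linarith [hσπ.le]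
    · -- π/2 < σ : use sin σ ≥ sin r and K σ ≤ σ
      have hKle : K σ ≤ σ := by
        have := intervalIntegral.integral_mono_on (μ := MeasureTheory.volume)
          (f := fun s => Real.sin s ^ (n - 1))
          (g := fun _ => (1:ℝ)) hσ.1.le
          ((Real.continuous_sin.pow _).intervalIntegrable 0 σ)
          (continuous_const.intervalIntegrable 0 σ)
          (fun x hx => by
            have hx0 : 0 ≤ Real.sin x :=
              Real.sin_nonneg_of_nonneg_of_le_pi hx.1 (hx.2.trans hσπ.le)
            exact pow_le_one₀ hx0 (Real.sin_le_one x))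
        rw [intervalIntegral.integral_const, smul_eq_mul, sub_zero, mul_one] at this
        exact this
      have hKnn : 0 ≤ K σ := hKnonneg σ hσ
      have hsinrσ : Real.sin r ≤ Real.sin σ := by
        rw [← Real.sin_pi_sub σ, ← Real.sin_pi_sub r]
        exact Real.sin_le_sin_of_le_of_le_pi_div_two (by linarith) (by linarith)
          (by linarith [hσ.2])
      have hpowle : Real.sin r ^ (n - 1) ≤ Real.sin σ ^ (n - 1) :=
        pow_le_pow_left₀ hsinr.le hsinrσ _
      have hsinrp : 0 < Real.sin r ^ (n - 1) := pow_pos hsinr _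
      have hinvle : (Real.sin σ ^ (n - 1))⁻¹ ≤ (Real.sin r ^ (n - 1))⁻¹ :=
        inv_anti₀ hsinrp hpowle
      have h1 : H σ ≤ σ * (Real.sin r ^ (n - 1))⁻¹ := by
        rw [hHK, one_div, mul_comm]
        exact mul_le_mul hKle hinvle (by positivity) hσ.1.le
      calc H σ ≤ σ * (Real.sin r ^ (n - 1))⁻¹ := h1
        _ ≤ Real.pi * (Real.sin r ^ (n - 1))⁻¹ :=
            mul_le_mul_of_nonneg_right hσπ.le hinvr
        _ ≤ C := by
            rw [hCdef, mul_one_add]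
            linarith [Real.pi_pos]
  -- H is interval integrable
  have hHmeas : Measurable H := by
    apply Measurable.mul
    · exact (measurable_const.div ((Real.continuous_sin.measurable).pow_const _))
    · exact (intervalIntegral.continuous_primitive
        (fun a b => (Real.continuous_sin.pow _).intervalIntegrable a b) 0).measurable
  have hHint : IntervalIntegrable H MeasureTheory.volume 0 r := by
    rw [intervalIntegrable_iff_integrableOn_Ioc_of_le hrle]
    apply MeasureTheory.Integrable.mono' (MeasureTheory.integrable_const C)
      hHmeas.aestronglyMeasurable
    rw [MeasureTheory.ae_restrict_iff' measurableSet_Ioc]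
    apply Filter.Eventually.of_forall
    intro x hx
    rw [Real.norm_eq_abs, abs_of_nonneg (hHpos x hx).le]
    exact hHbound x hx
  -- the denominator integral is positive
  have hIpos : 0 < ∫ σ in (0:ℝ)..r, H σ :=
    intervalIntegral.intervalIntegral_pos_of_pos_on hHint
      (fun x hx => hHpos x ⟨hx.1, hx.2.le⟩) hr
  -- J ≤ φ 0 · K on (0, r]
  have hJle : ∀ σ ∈ Set.Ioc (0:ℝ) r, J σ ≤ φ 0 * K σ := by
    intro σ hσ
    have h1 : J σ ≤ ∫ s in (0:ℝ)..σ, φ 0 * Real.sin s ^ (n - 1) := by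
      apply intervalIntegral.integral_mono_on hσ.1.le
      · apply ContinuousOn.intervalIntegrable
        rw [Set.uIcc_of_le hσ.1.le]
        exact (Real.continuous_sin.pow _).continuousOn.mul
          (hφcont.mono (Set.Icc_subset_Icc le_rfl hσ.2))
      · exact (continuous_const.mul (Real.continuous_sin.pow _)).intervalIntegrable 0 σ
      · intro x hx
        have hx0 : 0 ≤ Real.sin x ^ (n - 1) :=
          pow_nonneg (hsinnonneg x ⟨hx.1, hx.2.trans hσ.2⟩) _
        have := hφle x ⟨hx.1, hx.2.trans hσ.2⟩
        calc Real.sin x ^ (n - 1) * φ x ≤ Real.sin x ^ (n - 1) * φ 0 :=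
              mul_le_mul_of_nonneg_left this hx0
          _ = φ 0 * Real.sin x ^ (n - 1) := mul_comm _ _
    rwa [intervalIntegral.integral_const_mul] at h1
  -- the main comparison
  have hmain : (∫ x in (0:ℝ)..r, -ψ x) ≤ ∫ σ in (0:ℝ)..r, (lam * φ 0) * H σ := by
    apply intervalIntegral.integral_mono_ae_restrict hrle
    · exact ((hψcont.mono (by rw [Set.uIcc_of_le hrle])).neg).intervalIntegrable
    · exact hHint.const_mul _
    · rw [Filter.EventuallyLE, MeasureTheory.ae_restrict_iff' measurableSet_Icc]
      filter_upwards [haemem r] with x hx hx2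
      simp only [Set.mem_insert_iff, Set.mem_singleton_iff, not_or] at hx
      have hx3 : x ∈ Set.Ioo (0:ℝ) r :=
        ⟨hx2.1.lt_of_ne (Ne.symm hx.1), hx2.2.lt_of_ne hx.2⟩
      have hs : (0:ℝ) < Real.sin x ^ (n - 1) := pow_pos (hsinpos x hx3) _
      have hψx := hψid x hx3
      have hJx := hJle x ⟨hx3.1, hx3.2.le⟩
      have hKx := hKnonneg x ⟨hx3.1, hx3.2.le⟩
      rw [hψx, hHK, neg_div, neg_neg]
      rw [div_le_iff₀ hs]
      have hexp : lam * φ 0 * ((1 / Real.sin x ^ (n - 1)) * K x) * Real.sin x ^ (n - 1)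
          = lam * (φ 0 * K x) := by
        field_simp
      rw [hexp]
      exact mul_le_mul_of_nonneg_left hJx hlampos.le
  -- conclude
  have hFTCr := hFTCφ r ⟨hrle, le_rfl⟩
  rw [hφr] at hFTCr
  have hsum : φ 0 = ∫ x in (0:ℝ)..r, -ψ x := by
    rw [intervalIntegral.integral_neg]
    linarith
  rw [intervalIntegral.integral_const_mul] at hmain
  have h1 : φ 0 ≤ lam * φ 0 * ∫ σ in (0:ℝ)..r, H σ := hsum.trans_le hmain
  have h2 : 1 ≤ lam * ∫ σ in (0:ℝ)..r, H σ := by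
    have := (mul_le_mul_iff_right₀ hφ0pos).mp (by linarith : φ 0 * 1 ≤ φ 0 * (lam * ∫ σ in (0:ℝ)..r, H σ))
    linarith
  rw [ge_iff_le, div_le_iff₀ hIpos]
  linarith
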